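/- arXiv:1609.09447 — 2 statements merged into one kernel-verified Lean document; each statement's English description precedes it below -/
import Mathlib

section
/- Let H be a finite simple graph and k ≥ 2 an integer. If H admits a coloring of its vertices with k colors such that adjacent vertices receive different colors and for any two colors the subgraph of H induced by the vertices of those two colors contains no cycle (an acyclic coloring with k colors), then box_ℓ(H) ≤ 2(k−1). -/
universe u

/-- A graph is an interval graph if its vertices can be assigned nonempty closed
intervals of `ℝ` so that distinct vertices are adjacent iff their intervals meet. -/
def IsIntervalGraph {V : Type*} (G : SimpleGraph V) : Prop :=
  ∃ I : V → Set ℝ,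
    (∀ v, ∃ a b : ℝ, a ≤ b ∧ I v = Set.Icc a b) ∧
    ∀ u v : V, u ≠ v → (G.Adj u v ↔ (I u ∩ I v).Nonempty)

/-- A co-interval graph is the complement of an interval graph. -/
def IsCoIntervalGraph {V : Type*} (G : SimpleGraph V) : Prop :=
  IsIntervalGraph Gᶜ

/-- `G` is a vertex-disjoint union of co-interval graphs: its vertex set can be
partitioned (here via the fibers of a map `c`) so that every edge joins two vertices of
the same part and the restriction to each part is a co-interval graph. -/
def IsUnionCoIntervalGraph {V : Type u} (G : SimpleGraph V) : Prop :=
  ∃ (ι : Type u) (c : V → ι),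
    (∀ u v : V, G.Adj u v → c u = c v) ∧
    ∀ i : ι, IsCoIntervalGraph (G.induce {v | c v = i})

/-- There is a covering of the edges of `Hᶜ` by finitely many subgraphs
`G 0, …, G (t-1)` of `Hᶜ`, each of which restricted to its non-isolated vertices is a
co-interval graph, such that every vertex is a non-isolated vertex of at most `s`
of them. -/
def LocalCoverLE {V : Type u} (H : SimpleGraph V) (s : ℕ) : Prop :=
  ∃ (t : ℕ) (G : Fin t → SimpleGraph V),
    (∀ i, G i ≤ Hᶜ) ∧
    (∀ u v : V, Hᶜ.Adj u v → ∃ i, (G i).Adj u v) ∧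
    (∀ i, IsCoIntervalGraph ((G i).induce (G i).support)) ∧
    ∀ v : V, {i : Fin t | v ∈ (G i).support}.ncard ≤ s

/-- The local boxicity of `H`. -/
noncomputable def localBoxicity {V : Type u} (H : SimpleGraph V) : ℕ :=
  sInf {s : ℕ | LocalCoverLE H s}

/-- The union boxicity of `H`: the least `k` such that `Hᶜ` is covered by `k`
subgraphs, each a vertex-disjoint union of co-interval graphs. -/
noncomputable def unionBoxicity {V : Type u} (H : SimpleGraph V) : ℕ :=
  sInf {k : ℕ | ∃ G : Fin k → SimpleGraph V,
    (∀ i, G i ≤ Hᶜ) ∧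
    (∀ u v : V, Hᶜ.Adj u v → ∃ i, (G i).Adj u v) ∧
    ∀ i, IsUnionCoIntervalGraph (G i)}

/-- The boxicity of `H`: the least `d` such that `H` is the intersection of `d`
interval graphs on its vertex set. -/
noncomputable def boxicity {V : Type u} (H : SimpleGraph V) : ℕ :=
  sInf {d : ℕ | ∃ G : Fin d → SimpleGraph V,
    (∀ i, IsIntervalGraph (G i)) ∧
    ∀ u v : V, u ≠ v → (H.Adj u v ↔ ∀ i, (G i).Adj u v)}

open SimpleGraph in
lemma exists_leaf_aux {W : Type} [Fintype W] (F : SimpleGraph W) (hF : F.IsAcyclic)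
    (s : Finset W) (hs : s.Nonempty) :
    ∃ w ∈ s, ∀ x ∈ s, ∀ y ∈ s, F.Adj w x → F.Adj w y → x = y := by
  classical
  by_contra hcon
  push_neg at hcon
  obtain ⟨w0, hw0⟩ := hs
  have step : ∀ prev cur : W, ∃ nxt : W,
      cur ∈ s → nxt ∈ s ∧ F.Adj cur nxt ∧ nxt ≠ prev := by
    intro prev cur
    by_cases hc : cur ∈ s
    · obtain ⟨x, hx, y, hy, ax, ay, hxy⟩ := hcon cur hc
      by_cases hxp : x = prev
      · exact ⟨y, fun _ => ⟨hy, ay, fun h => hxy (by rw [hxp, h])⟩⟩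
      · exact ⟨x, fun _ => ⟨hx, ax, hxp⟩⟩
    · exact ⟨w0, fun h => absurd h hc⟩
  choose nf hnf using step
  set h : ℕ → W × W := fun n => Nat.rec (w0, nf w0 w0) (fun _ p => (p.2, nf p.1 p.2)) n with hh
  have h0 : h 0 = (w0, nf w0 w0) := rfl
  have hsucc : ∀ n, h (n+1) = ((h n).2, nf (h n).1 (h n).2) := fun n => rfl
  have mem2 : ∀ n, (h n).1 ∈ s ∧ (h n).2 ∈ s ∧ F.Adj (h n).1 (h n).2 := by
    intro n
    induction n with
    | zero =>
        exact ⟨hw0, (hnf w0 w0 hw0).1, (hnf w0 w0 hw0).2.1⟩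
    | succ n ih =>
        rw [hsucc n]
        exact ⟨ih.2.1, (hnf (h n).1 (h n).2 ih.2.1).1, (hnf (h n).1 (h n).2 ih.2.1).2.1⟩
  set g : ℕ → W := fun n => (h n).1 with hg
  have hg1 : ∀ n, g (n+1) = (h n).2 := fun n => rfl
  have adj : ∀ n, F.Adj (g n) (g (n+1)) := by
    intro n; rw [hg1 n]; exact (mem2 n).2.2
  have neq2 : ∀ n, g (n+2) ≠ g n := by
    intro n
    rw [hg1 (n+1), hsucc n]
    exact (hnf (h n).1 (h n).2 (mem2 n).2.1).2.2
  obtain ⟨a, b, hab, hgab⟩ := Finite.exists_ne_map_eq_of_infinite g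
  have hex : ∃ m, 0 < m ∧ ∃ i, g (i + m) = g i := by
    rcases Nat.lt_or_ge a b with hlt | hge
    · exact ⟨b - a, by omega, a, by rw [show a + (b - a) = b by omega]; exact hgab.symm⟩
    · have hlt : b < a := by omega
      exact ⟨a - b, by omega, b, by rw [show b + (a - b) = a by omega]; exact hgab⟩
  have hspec := Nat.find_spec hex
  have hmin : ∀ m, m < Nat.find hex → ¬(0 < m ∧ ∃ i, g (i + m) = g i) :=
    fun m h2 => Nat.find_min hex h2
  set m0 := Nat.find hex with hm0def
  obtain ⟨hm0pos, i, hi⟩ := hspec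
  replace hmin : ∀ m, 0 < m → m < m0 → ∀ j, g (j + m) ≠ g j := by
    intro m h1 h2 j hj
    exact hmin m h2 ⟨h1, j, hj⟩
  have hm3 : 3 ≤ m0 := by
    by_contra hlt
    push_neg at hlt
    interval_cases m0
    · exact (adj i).ne' (by simpa using hi)
    · exact neq2 i (by simpa using hi)
  have distinct : ∀ a b, a < b → b < m0 → g (i + a) ≠ g (i + b) := by
    intro a b hab hb he
    exact hmin (b - a) (by omega) (by omega) (i + a)
      (by rw [show i + a + (b - a) = i + b by omega]; exact he.symm)
  have hwalk : ∀ n : ℕ, ∃ wlk : F.Walk (g i) (g (i + n)),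
      wlk.support = (List.range (n+1)).map (fun a => g (i + a)) ∧ wlk.length = n := by
    intro n
    induction n with
    | zero => exact ⟨Walk.nil, by rw [List.range_succ]; simp, rfl⟩
    | succ n ih =>
        obtain ⟨wlk, hsup, hlen⟩ := ih
        refine ⟨wlk.concat (adj (i+n)), ?_, ?_⟩
        · rw [Walk.support_concat, hsup]
          simp [List.range_succ]
        · rw [Walk.length_concat, hlen]
  obtain ⟨wlk, hsup, hlen⟩ := hwalk (m0 - 1)
  have hpath : wlk.IsPath := by
    rw [Walk.isPath_def, hsup]
    apply List.Nodup.map_on _ List.nodup_range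
    intro x hx y hy hxy
    rw [List.mem_range] at hx hy
    rcases lt_trichotomy x y with h | h | h
    · exact absurd hxy (distinct x y h (by omega))
    · exact h
    · exact absurd hxy.symm (distinct y x h (by omega))
  have hadj_end : F.Adj (g i) (g (i + (m0 - 1))) := by
    have := adj (i + (m0 - 1))
    rw [show i + (m0 - 1) + 1 = i + m0 by omega, hi] at this
    exact this.symm
  have heq := hF.path_unique (SimpleGraph.Path.singleton hadj_end) ⟨wlk, hpath⟩
  have hlen1 : (SimpleGraph.Path.singleton hadj_end).1.length = 1 := by
    simp [SimpleGraph.Path.singleton]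
  rw [heq] at hlen1
  simp only at hlen1
  rw [hlen] at hlen1
  omega

private def icc (r : ℝ × ℝ) : Set ℝ := Set.Icc r.1 r.2

private lemma icc_ssub {a b c d : ℝ} (hcd : c ≤ d) (hca : c ≤ a) (hbd : b ≤ d)
    (h : c < a ∨ b < d) : Set.Icc a b ⊂ Set.Icc c d := by
  rw [Set.ssubset_def]
  constructor
  · exact Set.Icc_subset_Icc hca hbd
  · intro hsub
    rcases h with h | h
    · exact absurd (hsub ⟨le_refl c, hcd⟩).1 (not_le.2 h)
    · exact absurd (hsub ⟨hcd, le_refl d⟩).2 (not_le.2 h)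

private lemma icc_disj {a b c d : ℝ} (h : b < c) : Set.Icc a b ∩ Set.Icc c d = ∅ := by
  rw [Set.eq_empty_iff_forall_notMem]
  rintro z ⟨⟨_, h1⟩, h2, _⟩
  linarith

private lemma ssub_nonempty_inter {S T : Set ℝ} (hst : S ⊂ T) (hne : S.Nonempty) :
    (S ∩ T).Nonempty := by
  obtain ⟨z, hz⟩ := hne
  exact ⟨z, hz, hst.subset hz⟩

private lemma rep_inv {W : Type} [Fintype W] [DecidableEq W] (F : SimpleGraph W)
    (hF : F.IsAcyclic) (s : Finset W) :
    ∃ (A : W → ℝ × ℝ) (d : W → ℕ),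
      (∀ v ∈ s, (A v).1 < (A v).2) ∧
      (∀ x ∈ s, ∀ y ∈ s, x ≠ y →
        (icc (A x) ∩ icc (A y) = ∅ ∨ icc (A x) ⊂ icc (A y) ∨ icc (A y) ⊂ icc (A x))) ∧
      (∀ x ∈ s, ∀ y ∈ s, icc (A x) ⊂ icc (A y) → d y < d x) ∧
      (∀ x ∈ s, ∀ y ∈ s, x ≠ y → (F.Adj x y ↔
        ((icc (A x) ⊂ icc (A y) ∧ d x = d y + 1) ∨
         (icc (A y) ⊂ icc (A x) ∧ d y = d x + 1)))) ∧
      (∀ v ∈ s, ∃ p q : ℝ, (A v).1 ≤ p ∧ p < q ∧ q ≤ (A v).2 ∧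
        ∀ x ∈ s, x ≠ v → (Set.Icc p q ∩ icc (A x) = ∅ ∨ icc (A v) ⊂ icc (A x))) := by
  induction s using Finset.strongInduction with
  | _ s ih =>
  rcases Finset.eq_empty_or_nonempty s with rfl | hne
  · exact ⟨fun _ => (0, 1), fun _ => 0, by simp, by simp, by simp, by simp, by simp⟩
  obtain ⟨w, hw, hleaf⟩ := exists_leaf_aux F hF s hne
  have hss : s.erase w ⊂ s := Finset.erase_ssubset hw
  obtain ⟨A, d, h1, h2, h3, h4, h5⟩ := ih (s.erase w) hss
  set s' := s.erase w with hs'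
  have hmem : ∀ x ∈ s, x ≠ w → x ∈ s' := fun x hx hne' => Finset.mem_erase.2 ⟨hne', hx⟩
  have hnes' : ∀ x ∈ s', x ≠ w := fun x hx => Finset.ne_of_mem_erase hx
  have hmem' : ∀ x ∈ s', x ∈ s := fun x hx => Finset.mem_of_mem_erase hx
  by_cases hex : ∃ u ∈ s', F.Adj w u
  · obtain ⟨u, hu, hadj⟩ := hex
    obtain ⟨p, q, hp1, hpq, hq2, hfree⟩ := h5 u hu
    have hAu12 : (A u).1 ≤ (A u).2 := le_trans hp1 (le_trans (le_of_lt hpq) hq2)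
    set A' := Function.update A w (p + (q - p)/3, p + 2*(q - p)/3) with hA'def
    set d' := Function.update d w (d u + 1) with hd'def
    have hA's : ∀ x ∈ s', A' x = A x := fun x hx =>
      Function.update_of_ne (hnes' x hx) _ _
    have hA'w : A' w = (p + (q - p)/3, p + 2*(q - p)/3) := Function.update_self _ _ _
    have hd's : ∀ x ∈ s', d' x = d x := fun x hx =>
      Function.update_of_ne (hnes' x hx) _ _
    have hd'w : d' w = d u + 1 := Function.update_self _ _ _
    have hw1 : (A' w).1 = p + (q - p)/3 := by rw [hA'w]
    have hw2 : (A' w).2 = p + 2*(q - p)/3 := by rw [hA'w]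
    have hicw : icc (A' w) = Set.Icc (p + (q - p)/3) (p + 2*(q - p)/3) := by
      rw [icc, hw1, hw2]
    have haw1 : (A' w).1 < (A' w).2 := by rw [hw1, hw2]; linarith
    have hsubpq : icc (A' w) ⊆ Set.Icc p q := by
      rw [hicw]; exact Set.Icc_subset_Icc (by linarith) (by linarith)
    have hwu : icc (A' w) ⊂ icc (A u) := by
      rw [hicw, icc]
      exact icc_ssub hAu12 (by linarith) (by linarith) (Or.inl (by linarith))
    have hvis : ∀ x ∈ s', x ≠ u → icc (A' w) ∩ icc (A x) = ∅ ∨ icc (A u) ⊂ icc (A x) := by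
      intro x hx hxu
      rcases hfree x hx hxu with hemp | hss2
      · left
        apply Set.eq_empty_of_subset_empty
        rw [← hemp]
        exact Set.inter_subset_inter_left _ hsubpq
      · exact Or.inr hss2
    have hwnonempty : (icc (A' w)).Nonempty := by
      rw [icc]; exact Set.nonempty_Icc.2 (le_of_lt haw1)
    have hadj_w : ∀ y ∈ s', (F.Adj w y ↔ y = u) := by
      intro y hy
      constructor
      · intro h; exact hleaf y (hmem' y hy) u (hmem' u hu) h hadj
      · rintro rfl; exact hadj
    have himp : ∀ x ∈ s', ¬(icc (A x) ⊂ icc (A' w)) := by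
      intro x hx hss2
      have hxne : (icc (A x)).Nonempty := by
        rw [icc]; exact Set.nonempty_Icc.2 (le_of_lt (h1 x hx))
      by_cases hxu : x = u
      · subst hxu
        exact ssubset_irrefl _ (hss2.trans hwu)
      · rcases hvis x hx hxu with hemp | hss3
        · have hint := ssub_nonempty_inter hss2 hxne
          rw [Set.inter_comm] at hint
          rw [hemp] at hint
          exact Set.not_nonempty_empty hint
        · exact ssubset_irrefl _ ((hss3.trans hss2).trans hwu)
    refine ⟨A', d', ?_, ?_, ?_, ?_, ?_⟩
    · intro v hv
      by_cases hvw : v = w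
      · subst hvw; exact haw1
      · rw [hA's v (hmem v hv hvw)]; exact h1 v (hmem v hv hvw)
    · intro x hx y hy hxy
      by_cases hxw : x = w
      · subst hxw
        have hyw : y ≠ x := fun h => hxy h.symm
        have hys' := hmem y hy hyw
        rw [hA's y hys']
        by_cases hyu : y = u
        · subst hyu; exact Or.inr (Or.inl hwu)
        · rcases hvis y hys' hyu with hemp | hss2
          · exact Or.inl hemp
          · exact Or.inr (Or.inl (hwu.trans hss2))
      · by_cases hyw : y = w
        · subst hyw
          have hxs' := hmem x hx hxw
          rw [hA's x hxs']
          by_cases hxu : x = u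
          · subst hxu; exact Or.inr (Or.inr hwu)
          · rcases hvis x hxs' hxu with hemp | hss2
            · exact Or.inl (by rw [Set.inter_comm]; exact hemp)
            · exact Or.inr (Or.inr (hwu.trans hss2))
        · rw [hA's x (hmem x hx hxw), hA's y (hmem y hy hyw)]
          exact h2 x (hmem x hx hxw) y (hmem y hy hyw) hxy
    · intro x hx y hy hss2
      by_cases hxw : x = w
      · subst hxw
        by_cases hyw : y = x
        · subst hyw; exact absurd hss2 (ssubset_irrefl _)
        · have hys' := hmem y hy hyw
          rw [hA's y hys'] at hss2
          rw [hd's y hys', hd'w]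
          by_cases hyu : y = u
          · subst hyu; omega
          · rcases hvis y hys' hyu with hemp | hss3
            · exfalso
              have hint := ssub_nonempty_inter hss2 hwnonempty
              rw [hemp] at hint
              exact Set.not_nonempty_empty hint
            · have := h3 u hu y hys' hss3
              omega
      · by_cases hyw : y = w
        · subst hyw
          have hxs' := hmem x hx hxw
          rw [hA's x hxs'] at hss2
          exact absurd hss2 (himp x hxs')
        · rw [hA's x (hmem x hx hxw), hA's y (hmem y hy hyw)] at hss2
          rw [hd's x (hmem x hx hxw), hd's y (hmem y hy hyw)]
          exact h3 x (hmem x hx hxw) y (hmem y hy hyw) hss2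
    · have main : ∀ y ∈ s', (F.Adj w y ↔
          ((icc (A' w) ⊂ icc (A' y) ∧ d' w = d' y + 1) ∨
           (icc (A' y) ⊂ icc (A' w) ∧ d' y = d' w + 1))) := by
        intro y hy
        rw [hA's y hy, hd's y hy, hd'w]
        constructor
        · intro hadjwy
          have hyu := (hadj_w y hy).1 hadjwy
          subst hyu
          exact Or.inl ⟨hwu, rfl⟩
        · rintro (⟨hssw, hdw⟩ | ⟨hssw, hdw⟩)
          · by_cases hyu : y = u
            · subst hyu; exact hadj
            · exfalso
              rcases hvis y hy hyu with hemp | hss3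
              · have hint := ssub_nonempty_inter hssw hwnonempty
                rw [hemp] at hint
                exact Set.not_nonempty_empty hint
              · have := h3 u hu y hy hss3
                omega
          · exact absurd hssw (himp y hy)
      intro x hx y hy hxy
      by_cases hxw : x = w
      · subst hxw
        have hyw : y ≠ x := fun h => hxy h.symm
        exact main y (hmem y hy hyw)
      · by_cases hyw : y = w
        · subst hyw
          rw [SimpleGraph.adj_comm, or_comm]
          exact main x (hmem x hx hxw)
        · rw [hA's x (hmem x hx hxw), hA's y (hmem y hy hyw),
            hd's x (hmem x hx hxw), hd's y (hmem y hy hyw)]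
          exact h4 x (hmem x hx hxw) y (hmem y hy hyw) hxy
    · intro v hv
      by_cases hvw : v = w
      · subst hvw
        refine ⟨p + 4*(q - p)/9, p + 5*(q - p)/9, ?_, by linarith, ?_, ?_⟩
        · rw [hw1]; linarith
        · rw [hw2]; linarith
        · intro x hx hxv
          have hxs' := hmem x hx hxv
          rw [hA's x hxs']
          by_cases hxu : x = u
          · subst hxu; exact Or.inr hwu
          · rcases hvis x hxs' hxu with hemp | hss3
            · left
              apply Set.eq_empty_of_subset_empty
              rw [← hemp]
              apply Set.inter_subset_inter_left
              rw [hicw]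
              exact Set.Icc_subset_Icc (by linarith) (by linarith)
            · exact Or.inr (hwu.trans hss3)
      · have hvs' := hmem v hv hvw
        by_cases hvu : v = u
        · subst hvu
          refine ⟨p, p + (q - p)/6, ?_, by linarith, ?_, ?_⟩
          · rw [hA's v hvs']; exact hp1
          · rw [hA's v hvs']; linarith
          · intro x hx hxu
            by_cases hxw : x = w
            · subst hxw
              left
              rw [hicw]
              exact icc_disj (by linarith)
            · have hxs' := hmem x hx hxw
              rw [hA's x hxs', hA's v hvs']
              rcases hfree x hxs' hxu with hemp | hss3
              · left
                apply Set.eq_empty_of_subset_empty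
                rw [← hemp]
                exact Set.inter_subset_inter_left _
                  (Set.Icc_subset_Icc (le_refl p) (by linarith))
              · exact Or.inr hss3
        · obtain ⟨pv, qv, hpv1, hpvqv, hqv2, hfreev⟩ := h5 v hvs'
          refine ⟨pv, qv, by rw [hA's v hvs']; exact hpv1, hpvqv,
            by rw [hA's v hvs']; exact hqv2, ?_⟩
          intro x hx hxv
          by_cases hxw : x = w
          · subst hxw
            left
            rcases hvis v hvs' hvu with hemp | hss3
            · have hsub : Set.Icc pv qv ⊆ icc (A v) := by
                rw [icc]; exact Set.Icc_subset_Icc hpv1 hqv2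
              apply Set.eq_empty_of_subset_empty
              rw [Set.inter_comm] at hemp
              rw [← hemp]
              exact Set.inter_subset_inter_left _ hsub
            · rcases hfreev u hu (fun h => hvu h.symm) with hemp2 | hss4
              · apply Set.eq_empty_of_subset_empty
                rw [← hemp2]
                exact Set.inter_subset_inter_right _ hwu.subset
              · exact absurd (hss3.trans hss4) (ssubset_irrefl _)
          · have hxs' := hmem x hx hxw
            rw [hA's x hxs', hA's v hvs']
            exact hfreev x hxs' hxv
  · push_neg at hex
    have hMex : ∀ t : Finset W, ∃ M : ℝ, ∀ x ∈ t, (A x).2 ≤ M := by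
      intro t
      induction t using Finset.induction with
      | empty => exact ⟨0, by simp⟩
      | @insert a t' hat iht =>
          obtain ⟨M, hM⟩ := iht
          refine ⟨max M (A a).2, ?_⟩
          intro x hx
          rcases Finset.mem_insert.1 hx with rfl | hx
          · exact le_max_right _ _
          · exact le_trans (hM x hx) (le_max_left _ _)
    obtain ⟨M, hMb⟩ := hMex s'
    set A' := Function.update A w (M + 1, M + 2) with hA'def
    set d' := Function.update d w 0 with hd'def
    have hA's : ∀ x ∈ s', A' x = A x := fun x hx =>
      Function.update_of_ne (hnes' x hx) _ _
    have hA'w : A' w = (M + 1, M + 2) := Function.update_self _ _ _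
    have hd's : ∀ x ∈ s', d' x = d x := fun x hx =>
      Function.update_of_ne (hnes' x hx) _ _
    have hicw : icc (A' w) = Set.Icc (M + 1) (M + 2) := by rw [icc, hA'w]
    have haw1 : (A' w).1 < (A' w).2 := by rw [hA'w]; norm_num
    have hwnonempty : (icc (A' w)).Nonempty := by
      rw [icc]; exact Set.nonempty_Icc.2 (le_of_lt haw1)
    have hdisjw : ∀ x ∈ s', icc (A' w) ∩ icc (A x) = ∅ := by
      intro x hx
      rw [hicw, icc, Set.eq_empty_iff_forall_notMem]
      rintro z ⟨⟨hz1, _⟩, _, hz2⟩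
      have := hMb x hx
      linarith
    have himp : ∀ x ∈ s', ¬(icc (A x) ⊂ icc (A' w)) := by
      intro x hx hss2
      have hxne : (icc (A x)).Nonempty := by
        rw [icc]; exact Set.nonempty_Icc.2 (le_of_lt (h1 x hx))
      have hint := ssub_nonempty_inter hss2 hxne
      rw [Set.inter_comm, hdisjw x hx] at hint
      exact Set.not_nonempty_empty hint
    have himp2 : ∀ x ∈ s', ¬(icc (A' w) ⊂ icc (A x)) := by
      intro x hx hss2
      have hint := ssub_nonempty_inter hss2 hwnonempty
      rw [hdisjw x hx] at hint
      exact Set.not_nonempty_empty hint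
    refine ⟨A', d', ?_, ?_, ?_, ?_, ?_⟩
    · intro v hv
      by_cases hvw : v = w
      · subst hvw; exact haw1
      · rw [hA's v (hmem v hv hvw)]; exact h1 v (hmem v hv hvw)
    · intro x hx y hy hxy
      by_cases hxw : x = w
      · subst hxw
        have hyw : y ≠ x := fun h => hxy h.symm
        rw [hA's y (hmem y hy hyw)]
        exact Or.inl (hdisjw y (hmem y hy hyw))
      · by_cases hyw : y = w
        · subst hyw
          rw [hA's x (hmem x hx hxw)]
          exact Or.inl (by rw [Set.inter_comm]; exact hdisjw x (hmem x hx hxw))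
        · rw [hA's x (hmem x hx hxw), hA's y (hmem y hy hyw)]
          exact h2 x (hmem x hx hxw) y (hmem y hy hyw) hxy
    · intro x hx y hy hss2
      by_cases hxw : x = w
      · subst hxw
        by_cases hyw : y = x
        · subst hyw; exact absurd hss2 (ssubset_irrefl _)
        · rw [hA's y (hmem y hy hyw)] at hss2
          exact absurd hss2 (himp2 y (hmem y hy hyw))
      · by_cases hyw : y = w
        · subst hyw
          rw [hA's x (hmem x hx hxw)] at hss2
          exact absurd hss2 (himp x (hmem x hx hxw))
        · rw [hA's x (hmem x hx hxw), hA's y (hmem y hy hyw)] at hss2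
          rw [hd's x (hmem x hx hxw), hd's y (hmem y hy hyw)]
          exact h3 x (hmem x hx hxw) y (hmem y hy hyw) hss2
    · intro x hx y hy hxy
      by_cases hxw : x = w
      · subst hxw
        have hyw : y ≠ x := fun h => hxy h.symm
        have hys' := hmem y hy hyw
        constructor
        · intro h; exact absurd h (hex y hys')
        · rintro (⟨hssw, _⟩ | ⟨hssw, _⟩)
          · rw [hA's y hys'] at hssw
            exact absurd hssw (himp2 y hys')
          · rw [hA's y hys'] at hssw
            exact absurd hssw (himp y hys')
      · by_cases hyw : y = w
        · subst hyw
          have hxs' := hmem x hx hxw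
          constructor
          · intro h
            exact absurd h.symm (hex x hxs')
          · rintro (⟨hssw, _⟩ | ⟨hssw, _⟩)
            · rw [hA's x hxs'] at hssw
              exact absurd hssw (himp x hxs')
            · rw [hA's x hxs'] at hssw
              exact absurd hssw (himp2 x hxs')
        · rw [hA's x (hmem x hx hxw), hA's y (hmem y hy hyw),
              hd's x (hmem x hx hxw), hd's y (hmem y hy hyw)]
          exact h4 x (hmem x hx hxw) y (hmem y hy hyw) hxy
    · intro v hv
      by_cases hvw : v = w
      · subst hvw
        refine ⟨M + 5/4, M + 7/4, ?_, by norm_num, ?_, ?_⟩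
        · rw [hA'w]; norm_num
        · rw [hA'w]; norm_num
        · intro x hx hxv
          have hxs' := hmem x hx hxv
          rw [hA's x hxs']
          left
          rw [icc, Set.eq_empty_iff_forall_notMem]
          rintro z ⟨⟨hz1, _⟩, _, hz2⟩
          have := hMb x hxs'
          linarith
      · have hvs' := hmem v hv hvw
        obtain ⟨pv, qv, hpv1, hpvqv, hqv2, hfreev⟩ := h5 v hvs'
        refine ⟨pv, qv, by rw [hA's v hvs']; exact hpv1, hpvqv,
          by rw [hA's v hvs']; exact hqv2, ?_⟩
        intro x hx hxv
        by_cases hxw : x = w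
        · subst hxw
          left
          rw [hicw, Set.eq_empty_iff_forall_notMem]
          rintro z ⟨⟨_, hz1⟩, hz2, _⟩
          have hb1 := hMb v hvs'
          have hb2 : qv ≤ (A v).2 := hqv2
          linarith
        · have hxs' := hmem x hx hxw
          rw [hA's x hxs', hA's v hvs']
          exact hfreev x hxs' hxv

private lemma rep_final {W : Type} [Fintype W] (F : SimpleGraph W) (hF : F.IsAcyclic) :
    ∃ A B : W → ℝ × ℝ, (∀ v, (A v).1 ≤ (A v).2) ∧ (∀ v, (B v).1 ≤ (B v).2) ∧
      ∀ u v : W, u ≠ v → (F.Adj u v ↔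
        ((Set.Icc (A u).1 (A u).2 ∩ Set.Icc (A v).1 (A v).2).Nonempty ∧
         (Set.Icc (B u).1 (B u).2 ∩ Set.Icc (B v).1 (B v).2).Nonempty)) := by
  classical
  obtain ⟨A, d, h1, h2, h3, h4, -⟩ := rep_inv F hF Finset.univ
  have h1' : ∀ v, (A v).1 < (A v).2 := fun v => h1 v (Finset.mem_univ v)
  refine ⟨A, fun v => ((d v : ℝ), (d v : ℝ) + 1),
    fun v => le_of_lt (h1' v), fun v => by norm_num, ?_⟩
  intro u v huv
  dsimp only
  have hmu := Finset.mem_univ u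
  have hmv := Finset.mem_univ v
  have hAune : (icc (A u)).Nonempty := Set.nonempty_Icc.2 (le_of_lt (h1' u))
  have hAvne : (icc (A v)).Nonempty := Set.nonempty_Icc.2 (le_of_lt (h1' v))
  constructor
  · intro hadj
    rcases (h4 u hmu v hmv huv).1 hadj with ⟨hss, hd⟩ | ⟨hss, hd⟩
    · constructor
      · exact ssub_nonempty_inter hss hAune
      · refine ⟨(d u : ℝ), ⟨le_refl _, by linarith⟩, ?_⟩
        have hc : (d u : ℝ) = (d v : ℝ) + 1 := by rw [hd]; push_cast; ring
        exact ⟨by linarith, by linarith⟩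
    · constructor
      · have := ssub_nonempty_inter hss hAvne
        rwa [Set.inter_comm] at this
      · refine ⟨(d v : ℝ), ?_, ⟨le_refl _, by linarith⟩⟩
        have hc : (d v : ℝ) = (d u : ℝ) + 1 := by rw [hd]; push_cast; ring
        exact ⟨by linarith, by linarith⟩
  · rintro ⟨hA, hB⟩
    have hd1 : d u ≤ d v + 1 := by
      obtain ⟨z, ⟨hz1, hz2⟩, hz3, hz4⟩ := hB
      have : (d u : ℝ) ≤ (d v : ℝ) + 1 := by linarith
      exact_mod_cast this
    have hd2 : d v ≤ d u + 1 := by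
      obtain ⟨z, ⟨hz1, hz2⟩, hz3, hz4⟩ := hB
      have : (d v : ℝ) ≤ (d u : ℝ) + 1 := by linarith
      exact_mod_cast this
    rcases h2 u hmu v hmv huv with hemp | hss | hss
    · exfalso
      have : (icc (A u) ∩ icc (A v)).Nonempty := hA
      rw [hemp] at this
      exact Set.not_nonempty_empty this
    · have hlt := h3 u hmu v hmv hss
      exact (h4 u hmu v hmv huv).2 (Or.inl ⟨hss, by omega⟩)
    · have hlt := h3 v hmv u hmu hss
      exact (h4 u hmu v hmv huv).2 (Or.inr ⟨hss, by omega⟩)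

private lemma fin2_cases : ∀ b : Fin 2, b = 0 ∨ b = 1 := by decide

/-- generic co-interval helper -/
private lemma cointerval_of_good {V : Type} (G : SimpleGraph V) (I : V → ℝ × ℝ)
    (h1 : ∀ v ∈ G.support, (I v).1 ≤ (I v).2)
    (h2 : ∀ u v : V, u ≠ v → u ∈ G.support → v ∈ G.support →
      (¬G.Adj u v ↔ (Set.Icc (I u).1 (I u).2 ∩ Set.Icc (I v).1 (I v).2).Nonempty)) :
    IsCoIntervalGraph (G.induce G.support) := by
  refine ⟨fun x => Set.Icc (I x.1).1 (I x.1).2,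
    fun x => ⟨(I x.1).1, (I x.1).2, h1 x.1 x.2, rfl⟩, ?_⟩
  intro x y hxy
  have hne : x.1 ≠ y.1 := fun h => hxy (Subtype.ext h)
  rw [SimpleGraph.compl_adj]
  constructor
  · rintro ⟨-, hnadj⟩
    refine (h2 x.1 y.1 hne x.2 y.2).1 ?_
    intro hadj
    exact hnadj hadj
  · intro hmeet
    refine ⟨hxy, ?_⟩
    intro hadj
    exact (h2 x.1 y.1 hne x.2 y.2).2 hmeet hadj

/-- If a finite graph `H` has an acyclic coloring with `k ≥ 2` colors
(a proper coloring in which the union of any two color classes induces a forest), then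
`box_ℓ(H) ≤ 2(k-1)`. -/
theorem stmt_17 {V : Type} [Fintype V] (H : SimpleGraph V) (k : ℕ) (hk : 2 ≤ k)
    (c : V → Fin k)
    (hproper : ∀ u v : V, H.Adj u v → c u ≠ c v)
    (hacyclic : ∀ i j : Fin k, (H.induce {v | c v = i ∨ c v = j}).IsAcyclic) :
    localBoxicity H ≤ 2 * (k - 1) := by
  classical
  have main : LocalCoverLE H (2 * (k - 1)) := by
    set S : Fin k → Fin k → Set V := fun i j => {v | c v = i ∨ c v = j} with hS
    have hrep := fun i j : Fin k => rep_final (H.induce (S i j)) (hacyclic i j)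
    choose A B hA hB hAB using hrep
    set Ext : Fin k → Fin k → Fin 2 → V → ℝ × ℝ := fun i j b x =>
      if h : x ∈ S i j then (if b = 0 then A i j ⟨x, h⟩ else B i j ⟨x, h⟩) else (0, 0)
      with hExtdef
    have hExtA : ∀ (i j : Fin k) (x : V) (hx : x ∈ S i j),
        Ext i j 0 x = A i j ⟨x, hx⟩ := by
      intro i j x hx
      rw [hExtdef]
      simp [hx]
    have hExtB : ∀ (i j : Fin k) (x : V) (hx : x ∈ S i j),
        Ext i j 1 x = B i j ⟨x, hx⟩ := by
      intro i j x hx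
      rw [hExtdef]
      simp [hx]
    have hExtle : ∀ (i j : Fin k) (b : Fin 2) (x : V), x ∈ S i j →
        (Ext i j b x).1 ≤ (Ext i j b x).2 := by
      intro i j b x hx
      rcases fin2_cases b with rfl | rfl
      · rw [hExtA i j x hx]; exact hA i j ⟨x, hx⟩
      · rw [hExtB i j x hx]; exact hB i j ⟨x, hx⟩
    -- the basic family of graphs
    set G' : Fin 2 × Fin k × Fin k → SimpleGraph V := fun p =>
      { Adj := fun u v => p.2.1 < p.2.2 ∧ u ≠ v ∧ u ∈ S p.2.1 p.2.2 ∧ v ∈ S p.2.1 p.2.2 ∧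
          ¬H.Adj u v ∧
          ¬(Set.Icc (Ext p.2.1 p.2.2 p.1 u).1 (Ext p.2.1 p.2.2 p.1 u).2 ∩
             Set.Icc (Ext p.2.1 p.2.2 p.1 v).1 (Ext p.2.1 p.2.2 p.1 v).2).Nonempty,
        symm := ⟨by
          rintro u v ⟨hij, hne, hu, hv, hna, hm⟩
          exact ⟨hij, hne.symm, hv, hu, fun h => hna h.symm,
            fun h => hm (by rwa [Set.inter_comm])⟩⟩,
        loopless := ⟨fun u h => h.2.1 rfl⟩ } with hG'def
    have hG'adj : ∀ p u v, (G' p).Adj u v ↔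
        (p.2.1 < p.2.2 ∧ u ≠ v ∧ u ∈ S p.2.1 p.2.2 ∧ v ∈ S p.2.1 p.2.2 ∧
          ¬H.Adj u v ∧
          ¬(Set.Icc (Ext p.2.1 p.2.2 p.1 u).1 (Ext p.2.1 p.2.2 p.1 u).2 ∩
             Set.Icc (Ext p.2.1 p.2.2 p.1 v).1 (Ext p.2.1 p.2.2 p.1 v).2).Nonempty) := by
      intro p u v
      rw [hG'def]
    have hsupS : ∀ p, ∀ x : V, x ∈ (G' p).support →
        x ∈ S p.2.1 p.2.2 ∧ p.2.1 < p.2.2 := by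
      rintro p x ⟨y, (hadj : (G' p).Adj x y)⟩
      rw [hG'adj] at hadj
      exact ⟨hadj.2.2.1, hadj.1⟩
    -- adjacency in H forces intervals to meet
    have hHmeet : ∀ (i j : Fin k) (b : Fin 2) (u v : V) (hu : u ∈ S i j) (hv : v ∈ S i j),
        u ≠ v → H.Adj u v →
        (Set.Icc (Ext i j b u).1 (Ext i j b u).2 ∩
         Set.Icc (Ext i j b v).1 (Ext i j b v).2).Nonempty := by
      intro i j b u v hu hv hne hadj
      have hne' : (⟨u, hu⟩ : ↥(S i j)) ≠ ⟨v, hv⟩ := fun h => hne (congrArg Subtype.val h)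
      have hadj' : (H.induce (S i j)).Adj ⟨u, hu⟩ ⟨v, hv⟩ := by
        simp only [SimpleGraph.comap_adj, Function.Embedding.coe_subtype]
        exact hadj
      have := (hAB i j ⟨u, hu⟩ ⟨v, hv⟩ hne').1 hadj'
      rcases fin2_cases b with rfl | rfl
      · rw [hExtA i j u hu, hExtA i j v hv]; exact this.1
      · rw [hExtB i j u hu, hExtB i j v hv]; exact this.2
    -- the encoding
    set e : (Fin 2 × Fin k × Fin k) ≃ Fin (2 * (k * k)) :=
      (Equiv.prodCongr (Equiv.refl (Fin 2)) finProdFinEquiv).trans finProdFinEquiv with he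
    refine ⟨2 * (k * k), fun m => G' (e.symm m), ?_, ?_, ?_, ?_⟩
    · -- subgraph of complement
      intro m u v hadj
      rw [hG'adj] at hadj
      rw [SimpleGraph.compl_adj]
      exact ⟨hadj.2.1, hadj.2.2.2.2.1⟩
    · -- covering
      intro u v h
      rw [SimpleGraph.compl_adj] at h
      obtain ⟨hne, hna⟩ := h
      obtain ⟨i, j, hij, hcu, hcv⟩ :
          ∃ i j : Fin k, i < j ∧ (c u = i ∨ c u = j) ∧ (c v = i ∨ c v = j) := by
        rcases lt_trichotomy (c u) (c v) with h' | h' | h'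
        · exact ⟨c u, c v, h', Or.inl rfl, Or.inr rfl⟩
        · by_cases h0 : (c u : ℕ) + 1 < k
          · refine ⟨c u, ⟨(c u : ℕ) + 1, h0⟩, ?_, Or.inl rfl, Or.inl h'.symm⟩
            rw [Fin.lt_def]
            exact Nat.lt_succ_self _
          · have hcub : (c u : ℕ) < k := (c u).2
            refine ⟨⟨0, by omega⟩, c u, ?_, Or.inr rfl, Or.inr h'.symm⟩
            rw [Fin.lt_def]
            show (0 : ℕ) < (c u : ℕ)
            omega
        · exact ⟨c v, c u, h', Or.inr rfl, Or.inl rfl⟩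
      have hu : u ∈ S i j := hcu
      have hv : v ∈ S i j := hcv
      have hne' : (⟨u, hu⟩ : ↥(S i j)) ≠ ⟨v, hv⟩ := fun h => hne (congrArg Subtype.val h)
      have hnadj : ¬(H.induce (S i j)).Adj ⟨u, hu⟩ ⟨v, hv⟩ := by
        simp only [SimpleGraph.comap_adj, Function.Embedding.coe_subtype]
        exact hna
      rw [hAB i j ⟨u, hu⟩ ⟨v, hv⟩ hne'] at hnadj
      rcases not_and_or.1 hnadj with hm | hm
      · refine ⟨e (0, i, j), ?_⟩
        simp only [Equiv.symm_apply_apply]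
        refine ⟨hij, hne, hu, hv, hna, ?_⟩
        rw [hExtA i j u hu, hExtA i j v hv]
        exact hm
      · refine ⟨e (1, i, j), ?_⟩
        simp only [Equiv.symm_apply_apply]
        refine ⟨hij, hne, hu, hv, hna, ?_⟩
        rw [hExtB i j u hu, hExtB i j v hv]
        exact hm
    · -- co-interval on support
      intro m
      set p := e.symm m with hp
      apply cointerval_of_good (G' p) (Ext p.2.1 p.2.2 p.1)
      · intro x hx
        exact hExtle p.2.1 p.2.2 p.1 x (hsupS p x hx).1
      · intro x y hne hx hy
        have hxS := (hsupS p x hx).1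
        have hyS := (hsupS p y hy).1
        have hij := (hsupS p x hx).2
        rw [hG'adj]
        constructor
        · intro hnadj
          by_contra hmeet
          by_cases hHxy : H.Adj x y
          · exact hmeet (hHmeet p.2.1 p.2.2 p.1 x y hxS hyS hne hHxy)
          · exact hnadj ⟨hij, hne, hxS, hyS, hHxy, hmeet⟩
        · intro hmeet hadj
          exact hadj.2.2.2.2.2 hmeet
    · -- counting
      intro v
      have hsub2 : {m : Fin (2 * (k * k)) | v ∈ (G' (e.symm m)).support} ⊆
          ↑(Finset.image e ((Finset.univ : Finset (Fin 2)) ×ˢ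
            (Finset.univ.filter
              (fun q : Fin k × Fin k => q.1 < q.2 ∧ (c v = q.1 ∨ c v = q.2))))) := by
        intro m hm
        simp only [Finset.coe_image, Set.mem_image, Finset.mem_coe, Finset.mem_product,
          Finset.mem_filter, Finset.mem_univ, true_and]
        refine ⟨e.symm m, ?_, Equiv.apply_symm_apply e m⟩
        obtain ⟨hSm, hij⟩ := hsupS (e.symm m) v hm
        exact ⟨hij, hSm⟩
      have hle1 := Set.ncard_le_ncard hsub2 (Finset.finite_toSet _)
      rw [Set.ncard_coe_finset] at hle1
      refine le_trans hle1 ?_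
      refine le_trans Finset.card_image_le ?_
      rw [Finset.card_product]
      have hcard2 : (Finset.univ : Finset (Fin 2)).card = 2 := by simp
      rw [hcard2]
      have hP2 : (Finset.univ.filter
          (fun q : Fin k × Fin k => q.1 < q.2 ∧ (c v = q.1 ∨ c v = q.2))).card ≤ k - 1 := by
        have hmaps : ∀ q ∈ Finset.univ.filter
            (fun q : Fin k × Fin k => q.1 < q.2 ∧ (c v = q.1 ∨ c v = q.2)),
            (if q.1 = c v then q.2 else q.1) ∈ Finset.univ.erase (c v) := by
          intro q hq
          rw [Finset.mem_filter] at hq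
          obtain ⟨-, hlt, hor⟩ := hq
          rw [Finset.mem_erase]
          by_cases h : q.1 = c v
          · rw [if_pos h]
            exact ⟨fun he => (ne_of_lt hlt) (h.trans he.symm ▸ rfl), Finset.mem_univ _⟩
          · rw [if_neg h]
            exact ⟨h, Finset.mem_univ _⟩
        have hinj : ∀ q1 ∈ Finset.univ.filter
            (fun q : Fin k × Fin k => q.1 < q.2 ∧ (c v = q.1 ∨ c v = q.2)),
            ∀ q2 ∈ Finset.univ.filter
            (fun q : Fin k × Fin k => q.1 < q.2 ∧ (c v = q.1 ∨ c v = q.2)),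
            (if q1.1 = c v then q1.2 else q1.1) = (if q2.1 = c v then q2.2 else q2.1) →
            q1 = q2 := by
          intro q1 hq1 q2 hq2 heq
          rw [Finset.mem_filter] at hq1 hq2
          obtain ⟨-, hlt1, hor1⟩ := hq1
          obtain ⟨-, hlt2, hor2⟩ := hq2
          by_cases h1 : q1.1 = c v <;> by_cases h2 : q2.1 = c v
          · rw [if_pos h1, if_pos h2] at heq
            exact Prod.ext (h1.trans h2.symm) heq
          · rw [if_pos h1, if_neg h2] at heq
            exfalso
            have h2' : q2.2 = c v := hor2.resolve_left (fun h => h2 h.symm) |>.symm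
            rw [Fin.lt_def] at hlt1 hlt2
            have e1 : (q1.2 : ℕ) = (q2.1 : ℕ) := by rw [heq]
            have e2 : (q1.1 : ℕ) = (c v : ℕ) := by rw [h1]
            have e3 : (q2.2 : ℕ) = (c v : ℕ) := by rw [h2']
            omega
          · rw [if_neg h1, if_pos h2] at heq
            exfalso
            have h1' : q1.2 = c v := hor1.resolve_left (fun h => h1 h.symm) |>.symm
            rw [Fin.lt_def] at hlt1 hlt2
            have e1 : (q1.1 : ℕ) = (q2.2 : ℕ) := by rw [heq]
            have e2 : (q2.1 : ℕ) = (c v : ℕ) := by rw [h2]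
            have e3 : (q1.2 : ℕ) = (c v : ℕ) := by rw [h1']
            omega
          · rw [if_neg h1, if_neg h2] at heq
            have h1' : q1.2 = c v := hor1.resolve_left (fun h => h1 h.symm) |>.symm
            have h2' : q2.2 = c v := hor2.resolve_left (fun h => h2 h.symm) |>.symm
            exact Prod.ext heq (h1'.trans h2'.symm)
        have := Finset.card_le_card_of_injOn _ hmaps hinj
        refine le_trans this ?_
        rw [Finset.card_erase_of_mem (Finset.mem_univ _), Finset.card_univ,
          Fintype.card_fin]
      exact le_trans (Nat.mul_le_mul_left 2 hP2) (le_refl _)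
  exact Nat.sInf_le main
end

section
/- Every co-interval graph in which every cycle has length at least 6 is acyclic; that is, if G is a co-interval graph containing no cycle of length 3, 4, or 5, then G contains no cycle at all (G is a forest). -/
open SimpleGraph Walk

-- getVert is the entry of support
lemma aux_getVert_support {V : Type*} {G : SimpleGraph V} {u v : V} (w : G.Walk u v) :
    ∀ i, i ≤ w.length → w.support[i]? = some (w.getVert i) := by
  induction w with
  | nil =>
    intro i hi
    obtain rfl : i = 0 := by simpa using hi
    rfl
  | cons h p ih =>
    intro i hi
    cases i with
    | zero => simp [Walk.support_cons]
    | succ n =>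
      simp only [support_cons, getVert_cons_succ, List.getElem?_cons_succ]
      exact ih n (by simpa using hi)

lemma aux_getVert_inj {V : Type*} {G : SimpleGraph V} {v : V} {w : G.Walk v v}
    (hc : w.IsCycle) {i j : ℕ} (hi1 : 1 ≤ i) (hi2 : i ≤ w.length)
    (hj1 : 1 ≤ j) (hj2 : j ≤ w.length) (h : w.getVert i = w.getVert j) : i = j := by
  have hn : w.support.tail.Nodup := hc.2
  have hlen : w.support.tail.length = w.length := by simp [Walk.length_support]
  have key : ∀ k, 1 ≤ k → k ≤ w.length → w.support.tail[k-1]? = some (w.getVert k) := by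
    intro k hk1 hk2
    rw [List.getElem?_tail]
    have : k - 1 + 1 = k := Nat.succ_pred_eq_of_pos hk1
    rw [this]
    exact aux_getVert_support w k hk2
  have h1 := key i hi1 hi2
  have h2 := key j hj1 hj2
  rw [h] at h1
  have := (List.getElem?_inj (by omega : i - 1 < w.support.tail.length) hn).mp (h1.trans h2.symm)
  omega

/-- A co-interval graph with no cycle of length 3, 4 or 5 (i.e. every
cycle has length at least 6) has no cycles at all: it is a forest. -/
theorem stmt_19 {V : Type*} [Fintype V] (G : SimpleGraph V)
    (hG : IsCoIntervalGraph G)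
    (hgirth : ∀ (v : V) (w : G.Walk v v), w.IsCycle →
      w.length ≠ 3 ∧ w.length ≠ 4 ∧ w.length ≠ 5) :
    G.IsAcyclic := by
  intro v w hw
  -- basic facts
  have h3 := hw.three_le_length
  obtain ⟨hn3, hn4, hn5⟩ := hgirth v w hw
  have h6 : 6 ≤ w.length := by omega
  set n := w.length with hnn
  set p0 := w.getVert 0 with hp0
  set p1 := w.getVert 1 with hp1
  set p2 := w.getVert 2 with hp2
  set p3 := w.getVert 3 with hp3
  set p4 := w.getVert 4 with hp4
  have hvp0 : p0 = v := w.getVert_zero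
  have hvn : w.getVert n = v := w.getVert_length
  -- distinctness
  have inj := fun {i j} hi1 hi2 hj1 hj2 h =>
    aux_getVert_inj hw (i := i) (j := j) hi1 hi2 hj1 hj2 h
  have ne14 : p1 ≠ p4 := fun h => by have := inj (i := 1) (j := 4) (by omega) (by omega) (by omega) (by omega) h; omega
  have ne13 : p1 ≠ p3 := fun h => by have := inj (i := 1) (j := 3) (by omega) (by omega) (by omega) (by omega) h; omega
  have ne12 : p1 ≠ p2 := fun h => by have := inj (i := 1) (j := 2) (by omega) (by omega) (by omega) (by omega) h; omega
  have ne23 : p2 ≠ p3 := fun h => by have := inj (i := 2) (j := 3) (by omega) (by omega) (by omega) (by omega) h; omega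
  have ne24 : p2 ≠ p4 := fun h => by have := inj (i := 2) (j := 4) (by omega) (by omega) (by omega) (by omega) h; omega
  have ne34 : p3 ≠ p4 := fun h => by have := inj (i := 3) (j := 4) (by omega) (by omega) (by omega) (by omega) h; omega
  have ne01 : p0 ≠ p1 := fun h => by
    rw [hvp0, ← hvn] at h
    have := inj (i := n) (j := 1) (by omega) (by omega) (by omega) (by omega) h; omega
  have ne02 : p0 ≠ p2 := fun h => by
    rw [hvp0, ← hvn] at h
    have := inj (i := n) (j := 2) (by omega) (by omega) (by omega) (by omega) h; omega
  have ne03 : p0 ≠ p3 := fun h => by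
    rw [hvp0, ← hvn] at h
    have := inj (i := n) (j := 3) (by omega) (by omega) (by omega) (by omega) h; omega
  have ne04 : p0 ≠ p4 := fun h => by
    rw [hvp0, ← hvn] at h
    have := inj (i := n) (j := 4) (by omega) (by omega) (by omega) (by omega) h; omega
  -- consecutive edges
  have e01 : G.Adj p0 p1 := w.adj_getVert_succ (by omega)
  have e12 : G.Adj p1 p2 := w.adj_getVert_succ (by omega)
  have e23 : G.Adj p2 p3 := w.adj_getVert_succ (by omega)
  have e34 : G.Adj p3 p4 := w.adj_getVert_succ (by omega)
  -- no chords
  have nA13 : ¬ G.Adj p1 p3 := by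
    intro hA
    have hcyc : (Walk.cons hA.symm (Walk.cons e12 (Walk.cons e23 Walk.nil))).IsCycle := by
      rw [Walk.cons_isCycle_iff]
      constructor
      · simp [Walk.isPath_def, ne12.symm, ne13.symm, ne23.symm, ne12, ne23, ne13]
      · simp only [Walk.edges_cons, Walk.edges_nil, List.mem_cons, List.not_mem_nil, or_false]
        push_neg
        constructor <;> intro h <;> rw [Sym2.eq_iff] at h <;> tauto
    exact (hgirth p3 _ hcyc).1 rfl
  have nA03 : ¬ G.Adj p0 p3 := by
    intro hA
    have hcyc : (Walk.cons hA.symm (Walk.cons e01 (Walk.cons e12 (Walk.cons e23 Walk.nil)))).IsCycle := by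
      rw [Walk.cons_isCycle_iff]
      constructor
      · simp [Walk.isPath_def, ne01, ne02, ne03, ne12, ne13, ne23,
          ne01.symm, ne02.symm, ne03.symm, ne12.symm, ne13.symm, ne23.symm]
      · simp only [Walk.edges_cons, Walk.edges_nil, List.mem_cons, List.not_mem_nil, or_false]
        push_neg
        refine ⟨?_, ?_, ?_⟩ <;> intro h <;> rw [Sym2.eq_iff] at h <;> tauto
    exact (hgirth p3 _ hcyc).2.1 rfl
  have nA14 : ¬ G.Adj p1 p4 := by
    intro hA
    have hcyc : (Walk.cons hA.symm (Walk.cons e12 (Walk.cons e23 (Walk.cons e34 Walk.nil)))).IsCycle := by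
      rw [Walk.cons_isCycle_iff]
      constructor
      · simp [Walk.isPath_def, ne12, ne13, ne14, ne23, ne24, ne34,
          ne12.symm, ne13.symm, ne14.symm, ne23.symm, ne24.symm, ne34.symm]
      · simp only [Walk.edges_cons, Walk.edges_nil, List.mem_cons, List.not_mem_nil, or_false]
        push_neg
        refine ⟨?_, ?_, ?_⟩ <;> intro h <;> rw [Sym2.eq_iff] at h <;> tauto
    exact (hgirth p4 _ hcyc).2.1 rfl
  have nA04 : ¬ G.Adj p0 p4 := by
    intro hA
    have hcyc : (Walk.cons hA.symm (Walk.cons e01 (Walk.cons e12 (Walk.cons e23 (Walk.cons e34 Walk.nil))))).IsCycle := by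
      rw [Walk.cons_isCycle_iff]
      constructor
      · simp [Walk.isPath_def, ne01, ne02, ne03, ne04, ne12, ne13, ne14, ne23, ne24, ne34,
          ne01.symm, ne02.symm, ne03.symm, ne04.symm, ne12.symm, ne13.symm, ne14.symm,
          ne23.symm, ne24.symm, ne34.symm]
      · simp only [Walk.edges_cons, Walk.edges_nil, List.mem_cons, List.not_mem_nil, or_false]
        push_neg
        refine ⟨?_, ?_, ?_, ?_⟩ <;> intro h <;> rw [Sym2.eq_iff] at h <;> tauto
    exact (hgirth p4 _ hcyc).2.2 rfl
  -- now the interval argument with a = p0, b = p1, c = p3, d = p4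
  obtain ⟨I, hIcc, hadj⟩ := hG
  have compl_adj : ∀ x y : V, x ≠ y → (Gᶜ.Adj x y ↔ x ≠ y ∧ ¬ G.Adj x y) := by
    intro x y _; exact SimpleGraph.compl_adj G x y
  have hmeet : ∀ x y : V, x ≠ y → ¬ G.Adj x y → (I x ∩ I y).Nonempty := by
    intro x y hne hna
    exact (hadj x y hne).mp ((compl_adj x y hne).mpr ⟨hne, hna⟩)
  have hdisj : ∀ x y : V, x ≠ y → G.Adj x y → I x ∩ I y = ∅ := by
    intro x y hne ha
    by_contra h
    have hne' := Set.nonempty_iff_ne_empty.mpr h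
    have : Gᶜ.Adj x y := (hadj x y hne).mpr hne'
    exact this.2 ha
  obtain ⟨a1, a2, ha, hIa⟩ := hIcc p0
  obtain ⟨b1, b2, hb, hIb⟩ := hIcc p1
  obtain ⟨c1, c2, hc, hIc⟩ := hIcc p3
  obtain ⟨d1, d2, hd, hId⟩ := hIcc p4
  have hab : I p0 ∩ I p1 = ∅ := hdisj _ _ ne01 e01
  have hcd : I p3 ∩ I p4 = ∅ := hdisj _ _ ne34 e34
  obtain ⟨x1, hx1⟩ := hmeet _ _ ne03 nA03   -- I p0 ∩ I p3
  obtain ⟨x2, hx2⟩ := hmeet _ _ ne04 nA04   -- I p0 ∩ I p4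
  obtain ⟨y1, hy1⟩ := hmeet _ _ ne13 nA13   -- I p1 ∩ I p3
  obtain ⟨y2, hy2⟩ := hmeet _ _ ne14 nA14   -- I p1 ∩ I p4
  rw [hIa, hIb] at hab
  rw [hIc, hId] at hcd
  rw [hIa, hIc] at hx1; rw [hIa, hId] at hx2
  rw [hIb, hIc] at hy1; rw [hIb, hId] at hy2
  obtain ⟨hx1a, hx1c⟩ := hx1
  obtain ⟨hx2a, hx2d⟩ := hx2
  obtain ⟨hy1b, hy1c⟩ := hy1
  obtain ⟨hy2b, hy2d⟩ := hy2
  simp only [Set.mem_Icc] at hx1a hx1c hx2a hx2d hy1b hy1c hy2b hy2d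
  -- disjointness gives gap
  have hgap : a2 < b1 ∨ b2 < a1 := by
    by_contra hcon
    push_neg at hcon
    have : max a1 b1 ∈ Set.Icc a1 a2 ∩ Set.Icc b1 b2 :=
      ⟨Set.mem_Icc.mpr ⟨le_max_left _ _, max_le ha hcon.1⟩,
       Set.mem_Icc.mpr ⟨le_max_right _ _, max_le hcon.2 hb⟩⟩
    rw [hab] at this
    exact this
  have hgap2 : ∀ z, z ∈ Set.Icc c1 c2 ∩ Set.Icc d1 d2 → False := by
    intro z hz; rw [hcd] at hz; exact hz
  rcases hgap with hg | hg
  · exact hgap2 a2 ⟨Set.mem_Icc.mpr ⟨by linarith, by linarith⟩,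
      Set.mem_Icc.mpr ⟨by linarith, by linarith⟩⟩
  · exact hgap2 b2 ⟨Set.mem_Icc.mpr ⟨by linarith, by linarith⟩,
      Set.mem_Icc.mpr ⟨by linarith, by linarith⟩⟩
end
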